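/- Let L ≤ U be real numbers, K ≥ 1, and for k = 1,…,K let a_k, b_k, c_k ∈ ℝ and S_k = { t ∈ ℝ : a_k t² + b_k t + c_k ≤ 0 }. Then the set F = [L, U] ∩ ⋂_{k=1}^{K} S_k is a union of at most K + 1 pairwise disjoint closed intervals: there exist an integer n with 0 ≤ n ≤ K + 1 and real numbers l₁ ≤ u₁ < l₂ ≤ u₂ < … < l_n ≤ u_n such that F = ⋃_{i=1}^{n} [l_i, u_i] (the union being empty when n = 0). -/

import Mathlib

open Set

lemma quadClass (a b c : ℝ) :
    {t : ℝ | a * t ^ 2 + b * t + c ≤ 0} = univ ∨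
    {t : ℝ | a * t ^ 2 + b * t + c ≤ 0} = ∅ ∨
    (∃ r, {t : ℝ | a * t ^ 2 + b * t + c ≤ 0} = Iic r) ∨
    (∃ r, {t : ℝ | a * t ^ 2 + b * t + c ≤ 0} = Ici r) ∨
    (∃ x y, {t : ℝ | a * t ^ 2 + b * t + c ≤ 0} = Icc x y) ∨
    (∃ r₁ r₂, r₁ < r₂ ∧ {t : ℝ | a * t ^ 2 + b * t + c ≤ 0} = Iic r₁ ∪ Ici r₂) := by
  rcases lt_trichotomy a 0 with ha | ha | ha
  · by_cases hd : b ^ 2 - 4 * a * c ≤ 0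
    · left
      ext t
      simp only [mem_setOf_eq, mem_univ, iff_true]
      nlinarith [sq_nonneg (2 * a * t + b)]
    · push_neg at hd
      set s := Real.sqrt (b ^ 2 - 4 * a * c) with hs
      have hs2 : s ^ 2 = b ^ 2 - 4 * a * c := Real.sq_sqrt (by linarith)
      have hspos : 0 < s := Real.sqrt_pos.mpr (by linarith)
      have h2a : (2 : ℝ) * a < 0 := by linarith
      refine Or.inr (Or.inr (Or.inr (Or.inr (Or.inr
        ⟨(-b + s) / (2 * a), (-b - s) / (2 * a), ?_, ?_⟩))))
      · rw [div_lt_div_right_of_neg h2a]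
        linarith
      · ext t
        simp only [mem_setOf_eq, mem_union, mem_Iic, mem_Ici]
        rw [le_div_iff_of_neg h2a, div_le_iff_of_neg h2a]
        constructor
        · intro hq
          by_contra hcon
          push_neg at hcon
          obtain ⟨h1, h2⟩ := hcon
          nlinarith [mul_pos (by linarith : (0:ℝ) < -(2*a*t + b - s))
            (by linarith : (0:ℝ) < 2*a*t + b + s)]
        · rintro (h | h)
          · nlinarith [mul_nonneg (by linarith : (0:ℝ) ≤ 2*a*t + b - s)
              (by linarith : (0:ℝ) ≤ 2*a*t + b + s)]
          · nlinarith [mul_nonneg (by linarith : (0:ℝ) ≤ -(2*a*t+b-s))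
              (by linarith : (0:ℝ) ≤ -(2*a*t+b+s))]
  · subst ha
    rcases lt_trichotomy b 0 with hb | hb | hb
    · refine Or.inr (Or.inr (Or.inr (Or.inl ⟨-c / b, ?_⟩)))
      ext t
      simp only [mem_setOf_eq, mem_Ici, zero_mul, zero_add]
      rw [div_le_iff_of_neg hb]
      constructor <;> intro h <;> nlinarith
    · subst hb
      by_cases hc : c ≤ 0
      · left
        ext t
        simp [hc]
      · right; left
        ext t
        simp [hc]
    · refine Or.inr (Or.inr (Or.inl ⟨-c / b, ?_⟩))
      ext t
      simp only [mem_setOf_eq, mem_Iic, zero_mul, zero_add]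
      rw [le_div_iff₀ hb]
      constructor <;> intro h <;> nlinarith
  · by_cases hd : b ^ 2 - 4 * a * c < 0
    · right; left
      ext t
      simp only [mem_setOf_eq, mem_empty_iff_false, iff_false, not_le]
      nlinarith [sq_nonneg (2 * a * t + b)]
    · push_neg at hd
      set s := Real.sqrt (b ^ 2 - 4 * a * c) with hs
      have hs2 : s ^ 2 = b ^ 2 - 4 * a * c := Real.sq_sqrt (by linarith)
      have hsnn : 0 ≤ s := Real.sqrt_nonneg _
      have h2a : (0:ℝ) < 2 * a := by linarith
      refine Or.inr (Or.inr (Or.inr (Or.inr (Or.inl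
        ⟨(-b - s) / (2 * a), (-b + s) / (2 * a), ?_⟩))))
      ext t
      simp only [mem_setOf_eq, mem_Icc]
      rw [div_le_iff₀ h2a, le_div_iff₀ h2a]
      constructor
      · intro hq
        constructor
        · by_contra hcon
          push_neg at hcon
          nlinarith [mul_pos (by linarith : (0:ℝ) < -(2*a*t + b + s))
            (by linarith : (0:ℝ) < -(2*a*t + b - s))]
        · by_contra hcon
          push_neg at hcon
          nlinarith [mul_pos (by linarith : (0:ℝ) < 2*a*t + b - s)
            (by linarith : (0:ℝ) < 2*a*t + b + s)]
      · rintro ⟨h1, h2⟩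
        nlinarith [mul_nonneg (by linarith : (0:ℝ) ≤ 2*a*t + b + s)
          (by linarith : (0:ℝ) ≤ -(2*a*t + b - s))]

def IccUnion : List (ℝ × ℝ) → Set ℝ
  | [] => ∅
  | p :: L => Icc p.1 p.2 ∪ IccUnion L

def OkL (L : List (ℝ × ℝ)) : Prop :=
  (∀ p ∈ L, p.1 ≤ p.2) ∧ L.Pairwise (fun p q => p.2 < q.1)

lemma mem_IccUnion {x : ℝ} : ∀ {L : List (ℝ × ℝ)}, x ∈ IccUnion L ↔ ∃ p ∈ L, x ∈ Icc p.1 p.2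
  | [] => by simp [IccUnion]
  | p :: L => by simp [IccUnion, mem_IccUnion (L := L)]

lemma IccUnion_append : ∀ (A B : List (ℝ × ℝ)), IccUnion (A ++ B) = IccUnion A ∪ IccUnion B
  | [], B => by simp [IccUnion]
  | p :: A, B => by simp [IccUnion, IccUnion_append A B, union_assoc]

noncomputable def trimL (f : ℝ × ℝ → ℝ × ℝ) (L : List (ℝ × ℝ)) : List (ℝ × ℝ) :=
  (L.map f).filter fun p => decide (p.1 ≤ p.2)

lemma trim_spec (f : ℝ × ℝ → ℝ × ℝ) (C : Set ℝ)
    (hC : ∀ p : ℝ × ℝ, Icc (f p).1 (f p).2 = Icc p.1 p.2 ∩ C)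
    (h1 : ∀ p : ℝ × ℝ, p.1 ≤ (f p).1) (h2 : ∀ p : ℝ × ℝ, (f p).2 ≤ p.2)
    (L : List (ℝ × ℝ)) (hL : OkL L) :
    OkL (trimL f L) ∧ IccUnion (trimL f L) = IccUnion L ∩ C ∧
      (trimL f L).length ≤ L.length := by
  refine ⟨⟨?_, ?_⟩, ?_, ?_⟩
  · intro p hp
    have := List.of_mem_filter hp
    simpa using this
  · apply List.Pairwise.filter
    rw [List.pairwise_map]
    refine hL.2.imp ?_
    intro p q hpq
    calc (f p).2 ≤ p.2 := h2 p
      _ < q.1 := hpq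
      _ ≤ (f q).1 := h1 q
  · clear hL
    induction L with
    | nil => simp [trimL, IccUnion]
    | cons p L ih =>
      simp only [trimL, List.map_cons, List.filter_cons] at *
      by_cases hv : (f p).1 ≤ (f p).2
      · simp only [hv, decide_eq_true_eq, if_pos, IccUnion, ih, hC p,
          union_inter_distrib_right]
      · have he : Icc p.1 p.2 ∩ C = ∅ := by
          rw [← hC p]; exact Icc_eq_empty hv
        simp [hv, IccUnion, ih, union_inter_distrib_right, he]
  · calc (trimL f L).length ≤ (L.map f).length := List.length_filter_le _ _
      _ = L.length := List.length_map _

lemma key_count (r₁ r₂ : ℝ) (hr : r₁ < r₂) :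
    ∀ L : List (ℝ × ℝ), OkL L →
      (L.countP fun p => decide (p.1 ≤ min p.2 r₁)) +
        (L.countP fun p => decide (max p.1 r₂ ≤ p.2)) ≤ L.length + 1 := by
  intro L
  induction L with
  | nil => simp
  | cons p L ih =>
    intro hOk
    obtain ⟨hval, hpw⟩ := hOk
    have hpL : ∀ q ∈ L, p.2 < q.1 := fun q hq => (List.pairwise_cons.mp hpw).1 q hq
    have hLok : OkL L := ⟨fun q hq => hval q (List.mem_cons_of_mem _ hq),
      (List.pairwise_cons.mp hpw).2⟩
    have ihL := ih hLok
    have hcount1 : (L.countP fun p => decide (p.1 ≤ min p.2 r₁)) ≤ L.length :=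
      List.countP_le_length
    have hcount2 : (L.countP fun p => decide (max p.1 r₂ ≤ p.2)) ≤ L.length :=
      List.countP_le_length
    by_cases h1 : p.1 ≤ min p.2 r₁ <;> by_cases h2 : max p.1 r₂ ≤ p.2
    · -- both hold at p : no q in L can satisfy the first predicate
      have hzero : (L.countP fun p => decide (p.1 ≤ min p.2 r₁)) = 0 := by
        rw [List.countP_eq_zero]
        intro q hq
        simp only [decide_eq_true_eq, not_le]
        have hq1 : p.2 < q.1 := hpL q hq
        have : r₂ ≤ p.2 := le_trans (le_max_right _ _) h2
        calc min q.2 r₁ ≤ r₁ := min_le_right _ _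
          _ < r₂ := hr
          _ ≤ p.2 := this
          _ < q.1 := hq1
      simp only [List.countP_cons, List.length_cons, decide_eq_true_eq, if_pos h1, if_pos h2, hzero]
      omega
    · simp only [List.countP_cons, List.length_cons, decide_eq_true_eq, if_pos h1, if_neg h2]
      omega
    · simp only [List.countP_cons, List.length_cons, decide_eq_true_eq, if_neg h1, if_pos h2]
      omega
    · simp only [List.countP_cons, List.length_cons, decide_eq_true_eq, if_neg h1, if_neg h2]
      omega

lemma split_spec (r₁ r₂ : ℝ) (hr : r₁ < r₂) (L : List (ℝ × ℝ)) (hL : OkL L) :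
    ∃ L' : List (ℝ × ℝ), OkL L' ∧
      IccUnion L' = IccUnion L ∩ (Iic r₁ ∪ Ici r₂) ∧ L'.length ≤ L.length + 1 := by
  set f₁ : ℝ × ℝ → ℝ × ℝ := fun p => (p.1, min p.2 r₁) with hf₁
  set f₂ : ℝ × ℝ → ℝ × ℝ := fun p => (max p.1 r₂, p.2) with hf₂
  have hC₁ : ∀ p : ℝ × ℝ, Icc (f₁ p).1 (f₁ p).2 = Icc p.1 p.2 ∩ Iic r₁ := by
    intro p; ext x; simp only [hf₁, mem_Icc, mem_inter_iff, mem_Iic, le_min_iff]; tauto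
  have hC₂ : ∀ p : ℝ × ℝ, Icc (f₂ p).1 (f₂ p).2 = Icc p.1 p.2 ∩ Ici r₂ := by
    intro p; ext x; simp only [hf₂, mem_Icc, mem_inter_iff, mem_Ici, max_le_iff]; tauto
  obtain ⟨ok1, set1, -⟩ :=
    trim_spec f₁ (Iic r₁) hC₁ (fun p => le_refl _) (fun p => min_le_left _ _) L hL
  obtain ⟨ok2, set2, -⟩ :=
    trim_spec f₂ (Ici r₂) hC₂ (fun p => le_max_left _ _) (fun p => le_refl _) L hL
  refine ⟨trimL f₁ L ++ trimL f₂ L, ⟨?_, ?_⟩, ?_, ?_⟩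
  · intro p hp
    rcases List.mem_append.mp hp with h | h
    exacts [ok1.1 p h, ok2.1 p h]
  · rw [List.pairwise_append]
    refine ⟨ok1.2, ok2.2, ?_⟩
    intro p hp q hq
    obtain ⟨p', -, rfl⟩ := List.mem_map.mp (List.mem_of_mem_filter hp)
    obtain ⟨q', -, rfl⟩ := List.mem_map.mp (List.mem_of_mem_filter hq)
    calc (f₁ p').2 = min p'.2 r₁ := rfl
      _ ≤ r₁ := min_le_right _ _
      _ < r₂ := hr
      _ ≤ max q'.1 r₂ := le_max_right _ _
      _ = (f₂ q').1 := rfl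
  · rw [IccUnion_append, set1, set2, inter_union_distrib_left]
  · rw [List.length_append]
    have l1 : (trimL f₁ L).length = L.countP fun p => decide (p.1 ≤ min p.2 r₁) := by
      rw [trimL, ← List.countP_eq_length_filter, List.countP_map]
      rfl
    have l2 : (trimL f₂ L).length = L.countP fun p => decide (max p.1 r₂ ≤ p.2) := by
      rw [trimL, ← List.countP_eq_length_filter, List.countP_map]
      rfl
    rw [l1, l2]
    exact key_count r₁ r₂ hr L hL

lemma step_spec (S : Set ℝ)
    (hS : S = univ ∨ S = ∅ ∨ (∃ r, S = Iic r) ∨ (∃ r, S = Ici r) ∨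
      (∃ x y, S = Icc x y) ∨ (∃ r₁ r₂, r₁ < r₂ ∧ S = Iic r₁ ∪ Ici r₂))
    (L : List (ℝ × ℝ)) (hL : OkL L) :
    ∃ L', OkL L' ∧ IccUnion L' = IccUnion L ∩ S ∧ L'.length ≤ L.length + 1 := by
  rcases hS with rfl | rfl | ⟨r, rfl⟩ | ⟨r, rfl⟩ | ⟨x, y, rfl⟩ | ⟨r₁, r₂, hr, rfl⟩
  · exact ⟨L, hL, by simp, by omega⟩
  · exact ⟨[], ⟨by simp, by simp⟩, by simp [IccUnion], by simp⟩
  · obtain ⟨ok, hset, hlen⟩ := trim_spec (fun p => (p.1, min p.2 r)) (Iic r)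
      (by intro p; ext z; simp only [mem_Icc, mem_inter_iff, mem_Iic, le_min_iff]; tauto)
      (fun p => le_refl _) (fun p => min_le_left _ _) L hL
    exact ⟨_, ok, hset, by omega⟩
  · obtain ⟨ok, hset, hlen⟩ := trim_spec (fun p => (max p.1 r, p.2)) (Ici r)
      (by intro p; ext z; simp only [mem_Icc, mem_inter_iff, mem_Ici, max_le_iff]; tauto)
      (fun p => le_max_left _ _) (fun p => le_refl _) L hL
    exact ⟨_, ok, hset, by omega⟩
  · obtain ⟨ok, hset, hlen⟩ := trim_spec (fun p => (max p.1 x, min p.2 y)) (Icc x y)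
      (by intro p; ext z;
          simp only [mem_Icc, mem_inter_iff, max_le_iff, le_min_iff]; tauto)
      (fun p => le_max_left _ _) (fun p => min_le_left _ _) L hL
    exact ⟨_, ok, hset, by omega⟩
  · exact split_spec r₁ r₂ hr L hL

lemma quadClass' (q : ℝ × ℝ × ℝ) :
    {t : ℝ | q.1 * t ^ 2 + q.2.1 * t + q.2.2 ≤ 0} = univ ∨
    {t : ℝ | q.1 * t ^ 2 + q.2.1 * t + q.2.2 ≤ 0} = ∅ ∨
    (∃ r, {t : ℝ | q.1 * t ^ 2 + q.2.1 * t + q.2.2 ≤ 0} = Iic r) ∨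
    (∃ r, {t : ℝ | q.1 * t ^ 2 + q.2.1 * t + q.2.2 ≤ 0} = Ici r) ∨
    (∃ x y, {t : ℝ | q.1 * t ^ 2 + q.2.1 * t + q.2.2 ≤ 0} = Icc x y) ∨
    (∃ r₁ r₂, r₁ < r₂ ∧
      {t : ℝ | q.1 * t ^ 2 + q.2.1 * t + q.2.2 ≤ 0} = Iic r₁ ∪ Ici r₂) :=
  quadClass q.1 q.2.1 q.2.2

lemma main_lemma :
    ∀ (cs : List (ℝ × ℝ × ℝ)) (x y : ℝ), x ≤ y →
      ∃ L' : List (ℝ × ℝ), OkL L' ∧ L'.length ≤ cs.length + 1 ∧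
        IccUnion L' = Icc x y ∩ ⋂ q ∈ cs, {t : ℝ | q.1 * t ^ 2 + q.2.1 * t + q.2.2 ≤ 0}
  | [], x, y, hxy =>
    ⟨[(x, y)], ⟨by simpa using hxy, by simp⟩, by simp, by simp [IccUnion]⟩
  | q :: cs, x, y, hxy => by
    obtain ⟨L, okL, lenL, setL⟩ := main_lemma cs x y hxy
    obtain ⟨L', okL', setL', lenL'⟩ := step_spec _ (quadClass' q) L okL
    refine ⟨L', okL', by simp only [List.length_cons]; omega, ?_⟩
    rw [setL', setL]
    have hsplit : ⋂ p ∈ (q :: cs), {t : ℝ | p.1 * t ^ 2 + p.2.1 * t + p.2.2 ≤ 0} =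
        (⋂ p ∈ cs, {t : ℝ | p.1 * t ^ 2 + p.2.1 * t + p.2.2 ≤ 0}) ∩
          {t : ℝ | q.1 * t ^ 2 + q.2.1 * t + q.2.2 ≤ 0} := by
      ext t
      simp only [mem_iInter, mem_inter_iff, List.mem_cons]
      constructor
      · intro h
        exact ⟨fun p hp => h p (Or.inr hp), h q (Or.inl rfl)⟩
      · rintro ⟨h1, h2⟩ p (rfl | hp)
        exacts [h2, h1 p hp]
    rw [hsplit, ← inter_assoc]


/-- The feasible set cut out of `[L, U]` by `K` quadratic constraints
`a_k t² + b_k t + c_k ≤ 0` is a union of at most `K + 1` pairwise disjoint, ordered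
closed intervals. -/
theorem stmt19 (L U : ℝ) (hLU : L ≤ U) (K : ℕ) (hK : 1 ≤ K)
    (a b c : Fin K → ℝ)
    (F : Set ℝ)
    (hF : F = Icc L U ∩ ⋂ k : Fin K, {t : ℝ | a k * t ^ 2 + b k * t + c k ≤ 0}) :
    ∃ (n : ℕ), n ≤ K + 1 ∧ ∃ l u : Fin n → ℝ,
      (∀ i, l i ≤ u i) ∧
      (∀ i j : Fin n, i < j → u i < l j) ∧
      F = ⋃ i : Fin n, Icc (l i) (u i) := by

  obtain ⟨L', ⟨hval, hpw⟩, hlen, hset⟩ :=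
    main_lemma (List.ofFn fun k : Fin K => (a k, b k, c k)) L U hLU
  refine ⟨L'.length, by simpa using hlen,
    fun i => (L'.get i).1, fun i => (L'.get i).2, ?_, ?_, ?_⟩
  · intro i
    exact hval _ (L'.get_mem i)
  · intro i j hij
    exact List.pairwise_iff_get.mp hpw i j hij
  · have hiInter : (⋂ k : Fin K, {t : ℝ | a k * t ^ 2 + b k * t + c k ≤ 0}) =
        ⋂ q ∈ (List.ofFn fun k : Fin K => (a k, b k, c k)),
          {t : ℝ | q.1 * t ^ 2 + q.2.1 * t + q.2.2 ≤ 0} := by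
      ext t
      simp only [mem_iInter, List.mem_ofFn, mem_setOf_eq]
      constructor
      · rintro h q ⟨k, rfl⟩
        exact h k
      · intro h k
        exact h _ ⟨k, rfl⟩
    have hIU : IccUnion L' = ⋃ i : Fin L'.length, Icc (L'.get i).1 (L'.get i).2 := by
      ext t
      rw [mem_IccUnion]
      simp only [mem_iUnion]
      constructor
      · rintro ⟨p, hp, ht⟩
        obtain ⟨i, rfl⟩ := List.mem_iff_get.mp hp
        exact ⟨i, ht⟩
      · rintro ⟨i, ht⟩
        exact ⟨_, L'.get_mem i, ht⟩
    rw [hF, hiInter, ← hset, hIU]
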